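/- Let (A, A'; (ρ0,ρ1), (μ0,μ1), (ρ0',ρ1'), (μ0',μ1')) be a matched pair of strict pre-Lie 2-algebras A = (A0, A1, d, ·) and A' = (A0', A1', d', ∘). Then the graded space (A0 ⊕ A0', A1 ⊕ A1') with differential d + d' and multiplication ∗ given by (x+x')∗(y+y') = x·y + x'∘y' + ρ0(x)y' + μ0'(y')x + ρ0'(x')y + μ0(y)x'; (x+x')∗(a+a') = x·a + x'∘a' + ρ0(x)a' + μ1'(a')x + ρ0'(x')a + μ1(a)x'; (a+a')∗(x+x') = a·x + a'∘x' + ρ1(a)x' + μ0'(x')a + ρ1'(a')x + μ0(x)a', for x,y ∈ A0, a ∈ A1, x',y' ∈ A0', a' ∈ A1', is a strict pre-Lie 2-algebra. -/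
import Mathlib


namespace PreLie2

open Module TensorProduct

variable (K : Type*) [Field K]

/-- A two-argument map between modules is bilinear. -/
def IsBilin {M N P : Type*} [AddCommGroup M] [Module K M] [AddCommGroup N] [Module K N]
    [AddCommGroup P] [Module K P] (f : M → N → P) : Prop :=
  (∀ m, IsLinearMap K (f m)) ∧ ∀ n, IsLinearMap K fun m => f m n

section TwoTerm

variable {A0 A1 : Type*} [AddCommGroup A0] [Module K A0] [AddCommGroup A1] [Module K A1]

/-- A strict pre-Lie `2`-algebra structure on the two-term complex `d : A1 → A0`. -/
structure IsStrictPreLie2 (d : A1 → A0) (m00 : A0 → A0 → A0)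
    (m01 : A0 → A1 → A1) (m10 : A1 → A0 → A1) : Prop where
  d_lin : IsLinearMap K d
  m00_bilin : IsBilin K m00
  m01_bilin : IsBilin K m01
  m10_bilin : IsBilin K m10
  d_m01 : ∀ x a, d (m01 x a) = m00 x (d a)
  d_m10 : ∀ a x, d (m10 a x) = m00 (d a) x
  d_mix : ∀ a b, m01 (d a) b = m10 a (d b)
  preLie0 : ∀ x y z, m00 x (m00 y z) - m00 (m00 x y) z = m00 y (m00 x z) - m00 (m00 y x) z
  preLie1 : ∀ x y a, m01 x (m01 y a) - m01 (m00 x y) a = m01 y (m01 x a) - m01 (m00 y x) a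
  preLie2 : ∀ a x y, m10 a (m00 x y) - m10 (m10 a x) y = m01 x (m10 a y) - m10 (m01 x a) y

/-- A strict Lie `2`-algebra structure on the two-term complex `δ : A1 → A0`. -/
structure IsStrictLie2 (δ : A1 → A0) (br0 : A0 → A0 → A0) (br1 : A0 → A1 → A1) : Prop where
  δ_lin : IsLinearMap K δ
  br0_bilin : IsBilin K br0
  br1_bilin : IsBilin K br1
  skew : ∀ x y, br0 x y = -br0 y x
  δ_br1 : ∀ x a, δ (br1 x a) = br0 x (δ a)
  br1_δ : ∀ a b, br1 (δ a) b = -br1 (δ b) a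
  jacobi0 : ∀ x y z, br0 (br0 x y) z + br0 (br0 y z) x + br0 (br0 z x) y = 0
  jacobi1 : ∀ x y b, br1 x (br1 y b) - br1 y (br1 x b) - br1 (br0 x y) b = 0

/-- A strict associative `2`-algebra structure on the two-term complex `d : A1 → A0`. -/
structure IsStrictAssoc2 (d : A1 → A0) (m00 : A0 → A0 → A0)
    (m01 : A0 → A1 → A1) (m10 : A1 → A0 → A1) : Prop where
  d_lin : IsLinearMap K d
  m00_bilin : IsBilin K m00
  m01_bilin : IsBilin K m01
  m10_bilin : IsBilin K m10
  d_m01 : ∀ x a, d (m01 x a) = m00 x (d a)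
  d_m10 : ∀ a x, d (m10 a x) = m00 (d a) x
  d_mix : ∀ a b, m01 (d a) b = m10 a (d b)
  assoc000 : ∀ x y z, m00 x (m00 y z) = m00 (m00 x y) z
  assoc001 : ∀ x y a, m01 x (m01 y a) = m01 (m00 x y) a
  assoc010 : ∀ x a y, m01 x (m10 a y) = m10 (m01 x a) y
  assoc100 : ∀ a x y, m10 a (m00 x y) = m10 (m10 a x) y

end TwoTerm

/-- A pre-Lie algebra structure. -/
structure IsPreLie {B : Type*} [AddCommGroup B] [Module K B] (mul : B → B → B) : Prop where
  bilin : IsBilin K mul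
  preLie : ∀ x y z, mul (mul x y) z - mul x (mul y z) = mul (mul y x) z - mul y (mul x z)

section Rep

variable {g0 g1 V0 V1 : Type*}
  [AddCommGroup g0] [Module K g0] [AddCommGroup g1] [Module K g1]
  [AddCommGroup V0] [Module K V0] [AddCommGroup V1] [Module K V1]

/-- A strict representation of a strict Lie 2-algebra `(g0, g1, δ, br0, br1)` on the
two-term complex `par : V1 → V0`. -/
structure IsStrictRepLie2 (δ : g1 → g0) (br0 : g0 → g0 → g0) (br1 : g0 → g1 → g1)
    (par : V1 → V0) (ρ00 : g0 → V0 → V0) (ρ01 : g0 → V1 → V1) (ρ1 : g1 → V0 → V1) : Prop where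
  ρ00_bilin : IsBilin K ρ00
  ρ01_bilin : IsBilin K ρ01
  ρ1_bilin : IsBilin K ρ1
  chain : ∀ x m, ρ00 x (par m) = par (ρ01 x m)
  comp0 : ∀ a v, ρ00 (δ a) v = par (ρ1 a v)
  comp1 : ∀ a m, ρ01 (δ a) m = ρ1 a (par m)
  rep00 : ∀ x y v, ρ00 (br0 x y) v = ρ00 x (ρ00 y v) - ρ00 y (ρ00 x v)
  rep01 : ∀ x y m, ρ01 (br0 x y) m = ρ01 x (ρ01 y m) - ρ01 y (ρ01 x m)
  rep1 : ∀ x a v, ρ1 (br1 x a) v = ρ01 x (ρ1 a v) - ρ1 a (ρ00 x v)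

/-- A strict representation of a strict pre-Lie 2-algebra `(g0, g1, d, m00, m01, m10)` on the
two-term complex `par : V1 → V0`. -/
structure IsStrictRepPreLie2 (d : g1 → g0) (m00 : g0 → g0 → g0) (m01 : g0 → g1 → g1)
    (m10 : g1 → g0 → g1) (par : V1 → V0)
    (ρ00 : g0 → V0 → V0) (ρ01 : g0 → V1 → V1) (ρ1 : g1 → V0 → V1)
    (μ00 : g0 → V0 → V0) (μ01 : g0 → V1 → V1) (μ1 : g1 → V0 → V1) : Prop where
  toRepLie : IsStrictRepLie2 K d (fun x y => m00 x y - m00 y x)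
    (fun x a => m01 x a - m10 a x) par ρ00 ρ01 ρ1
  μ00_bilin : IsBilin K μ00
  μ01_bilin : IsBilin K μ01
  μ1_bilin : IsBilin K μ1
  μchain : ∀ x m, μ00 x (par m) = par (μ01 x m)
  μcomp0 : ∀ a v, μ00 (d a) v = par (μ1 a v)
  μcomp1 : ∀ a m, μ01 (d a) m = μ1 a (par m)
  eqA0 : ∀ x y v, μ00 (m00 x y) v + μ00 y (ρ00 x v) - ρ00 x (μ00 y v) - μ00 y (μ00 x v) = 0
  eqA1 : ∀ x y m, μ01 (m00 x y) m + μ01 y (ρ01 x m) - ρ01 x (μ01 y m) - μ01 y (μ01 x m) = 0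
  eqB : ∀ x a v, μ1 (m01 x a) v - ρ01 x (μ1 a v) + μ1 a (ρ00 x v) - μ1 a (μ00 x v) = 0
  eqC : ∀ a x v, μ1 (m10 a x) v - ρ1 a (μ00 x v) + μ01 x (ρ1 a v) - μ01 x (μ1 a v) = 0

/-- An `O`-operator on a strict Lie 2-algebra associated to a strict representation. -/
structure IsOOperator (δ : g1 → g0) (br0 : g0 → g0 → g0) (br1 : g0 → g1 → g1)
    (par : V1 → V0) (ρ00 : g0 → V0 → V0) (ρ01 : g0 → V1 → V1) (ρ1 : g1 → V0 → V1)
    (T0 : V0 → g0) (T1 : V1 → g1) : Prop where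
  T0_lin : IsLinearMap K T0
  T1_lin : IsLinearMap K T1
  chain : ∀ m, T0 (par m) = δ (T1 m)
  eq0 : ∀ u v, T0 (ρ00 (T0 u) v - ρ00 (T0 v) u) = br0 (T0 u) (T0 v)
  eq1 : ∀ m v, T1 (ρ1 (T1 m) v - ρ01 (T0 v) m) = -br1 (T0 v) (T1 m)

end Rep

section Matched

variable {g0 g1 h0 h1 : Type*}
  [AddCommGroup g0] [Module K g0] [AddCommGroup g1] [Module K g1]
  [AddCommGroup h0] [Module K h0] [AddCommGroup h1] [Module K h1]

/-- A matched pair of strict Lie 2-algebras. -/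
structure IsMatchedPairLie2
    (δ : g1 → g0) (br0 : g0 → g0 → g0) (br1 : g0 → g1 → g1)
    (δ' : h1 → h0) (br0' : h0 → h0 → h0) (br1' : h0 → h1 → h1)
    (ν00 : g0 → h0 → h0) (ν01 : g0 → h1 → h1) (ν1 : g1 → h0 → h1)
    (ν00' : h0 → g0 → g0) (ν01' : h0 → g1 → g1) (ν1' : h1 → g0 → g1) : Prop where
  lie : IsStrictLie2 K δ br0 br1
  lie' : IsStrictLie2 K δ' br0' br1'
  rep : IsStrictRepLie2 K δ br0 br1 δ' ν00 ν01 ν1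
  rep' : IsStrictRepLie2 K δ' br0' br1' δ ν00' ν01' ν1'
  eqL1 : ∀ x' x y, ν00' x' (br0 x y) =
      br0 x (ν00' x' y) + br0 (ν00' x' x) y + ν00' (ν00 y x') x - ν00' (ν00 x x') y
  eqL2 : ∀ x x' y', ν00 x (br0' x' y') =
      br0' x' (ν00 x y') + br0' (ν00 x x') y' + ν00 (ν00' y' x) x' - ν00 (ν00' x' x) y'
  eqL3 : ∀ h' x y, ν1' h' (br0 x y) =
      br1 x (ν1' h' y) - br1 y (ν1' h' x) + ν1' (ν01 y h') x - ν1' (ν01 x h') y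
  eqL4 : ∀ h x' y', ν1 h (br0' x' y') =
      br1' x' (ν1 h y') - br1' y' (ν1 h x') + ν1 (ν01' y' h) x' - ν1 (ν01' x' h) y'
  eqL5 : ∀ x' x h, ν01' x' (br1 x h) =
      br1 x (ν01' x' h) + br1 (ν00' x' x) h + ν1' (ν1 h x') x - ν01' (ν00 x x') h
  eqL6 : ∀ x x' h', ν01 x (br1' x' h') =
      br1' x' (ν01 x h') + br1' (ν00 x x') h' + ν1 (ν1' h' x) x' - ν01 (ν00' x' x) h'

/-- A matched pair of strict pre-Lie 2-algebras. -/
structure IsMatchedPairPreLie2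
    (d : g1 → g0) (m00 : g0 → g0 → g0) (m01 : g0 → g1 → g1) (m10 : g1 → g0 → g1)
    (d' : h1 → h0) (n00 : h0 → h0 → h0) (n01 : h0 → h1 → h1) (n10 : h1 → h0 → h1)
    (ρ00 : g0 → h0 → h0) (ρ01 : g0 → h1 → h1) (ρ1 : g1 → h0 → h1)
    (μ00 : g0 → h0 → h0) (μ01 : g0 → h1 → h1) (μ1 : g1 → h0 → h1)
    (ρ00' : h0 → g0 → g0) (ρ01' : h0 → g1 → g1) (ρ1' : h1 → g0 → g1)
    (μ00' : h0 → g0 → g0) (μ01' : h0 → g1 → g1) (μ1' : h1 → g0 → g1) : Prop where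
  alg : IsStrictPreLie2 K d m00 m01 m10
  alg' : IsStrictPreLie2 K d' n00 n01 n10
  rep : IsStrictRepPreLie2 K d m00 m01 m10 d' ρ00 ρ01 ρ1 μ00 μ01 μ1
  rep' : IsStrictRepPreLie2 K d' n00 n01 n10 d ρ00' ρ01' ρ1' μ00' μ01' μ1'
  eqM1 : ∀ a' x y, μ1' a' (m00 x y - m00 y x) =
      m01 x (μ1' a' y) - m01 y (μ1' a' x) + μ1' (ρ01 y a') x - μ1' (ρ01 x a') y
  eqM2 : ∀ a x' y', μ1 a (n00 x' y' - n00 y' x') =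
      n01 x' (μ1 a y') - n01 y' (μ1 a x') + μ1 (ρ01' y' a) x' - μ1 (ρ01' x' a) y'
  eqM3 : ∀ z' x y, μ00' z' (m00 x y - m00 y x) =
      m00 x (μ00' z' y) - m00 y (μ00' z' x) + μ00' (ρ00 y z') x - μ00' (ρ00 x z') y
  eqM4 : ∀ z x' y', μ00 z (n00 x' y' - n00 y' x') =
      n00 x' (μ00 z y') - n00 y' (μ00 z x') + μ00 (ρ00' y' z) x' - μ00 (ρ00' x' z) y'
  eqM5 : ∀ y' x a, μ01' y' (m01 x a - m10 a x) =
      m01 x (μ01' y' a) - m10 a (μ00' y' x) + μ1' (ρ1 a y') x - μ01' (ρ00 x y') a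
  eqM6 : ∀ y x' a', μ01 y (n01 x' a' - n10 a' x') =
      n01 x' (μ01 y a') - n10 a' (μ00 y x') + μ1 (ρ1' a' y) x' - μ01 (ρ00' x' y) a'
  eqM7 : ∀ x y' a', ρ01 x (n01 y' a') =
      n01 (ρ00 x y' - μ00 x y') a' + ρ01 (μ00' y' x - ρ00' y' x) a'
        + n01 y' (ρ01 x a') + μ1 (μ1' a' x) y'
  eqM8 : ∀ x' y a, ρ01' x' (m01 y a) =
      m01 (ρ00' x' y - μ00' x' y) a + ρ01' (μ00 y x' - ρ00 y x') a
        + m01 y (ρ01' x' a) + μ1' (μ1 a x') y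
  eqM9 : ∀ x a' y', ρ01 x (n10 a' y') =
      n10 (ρ01 x a' - μ01 x a') y' + ρ1 (μ1' a' x - ρ1' a' x) y'
        + n10 a' (ρ00 x y') + μ01 (μ00' y' x) a'
  eqM10 : ∀ x' a y, ρ01' x' (m10 a y) =
      m10 (ρ01' x' a - μ01' x' a) y + ρ1' (μ1 a x' - ρ1 a x') y
        + m10 a (ρ00' x' y) + μ01' (μ00 y x') a
  eqM11 : ∀ a x' y', ρ1 a (n00 x' y') =
      n10 (ρ1 a x' - μ1 a x') y' + ρ1 (μ01' x' a - ρ01' x' a) y'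
        + n01 x' (ρ1 a y') + μ1 (μ01' y' a) x'
  eqM12 : ∀ a' x y, ρ1' a' (m00 x y) =
      m10 (ρ1' a' x - μ1' a' x) y + ρ1' (μ01 x a' - ρ01 x a') y
        + m01 x (ρ1' a' y) + μ1' (μ01 y a') x
  eqM13 : ∀ x y' z', ρ00 x (n00 y' z') =
      n00 (ρ00 x y' - μ00 x y') z' + ρ00 (μ00' y' x - ρ00' y' x) z'
        + n00 y' (ρ00 x z') + μ00 (μ00' z' x) y'
  eqM14 : ∀ x' y z, ρ00' x' (m00 y z) =
      m00 (ρ00' x' y - μ00' x' y) z + ρ00' (μ00 y x' - ρ00 y x') z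
        + m00 y (ρ00' x' z) + μ00' (μ00 z x') y

end Matched

end PreLie2

open PreLie2 Module

set_option maxHeartbeats 2000000 in
/-- a matched pair of strict pre-Lie 2-algebras gives a strict pre-Lie
2-algebra structure on the direct sum. -/
theorem matched_pair_preLie2_gives_sum_preLie2
    {K : Type*} [Field K] [CharZero K]
    {A0 A1 B0 B1 : Type*} [AddCommGroup A0] [Module K A0] [FiniteDimensional K A0]
    [AddCommGroup A1] [Module K A1] [FiniteDimensional K A1]
    [AddCommGroup B0] [Module K B0] [FiniteDimensional K B0]
    [AddCommGroup B1] [Module K B1] [FiniteDimensional K B1]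
    (d : A1 →ₗ[K] A0) (m00 : A0 →ₗ[K] A0 →ₗ[K] A0) (m01 : A0 →ₗ[K] A1 →ₗ[K] A1)
    (m10 : A1 →ₗ[K] A0 →ₗ[K] A1)
    (d' : B1 →ₗ[K] B0) (n00 : B0 →ₗ[K] B0 →ₗ[K] B0) (n01 : B0 →ₗ[K] B1 →ₗ[K] B1)
    (n10 : B1 →ₗ[K] B0 →ₗ[K] B1)
    (ρ00 : A0 →ₗ[K] B0 →ₗ[K] B0) (ρ01 : A0 →ₗ[K] B1 →ₗ[K] B1) (ρ1 : A1 →ₗ[K] B0 →ₗ[K] B1)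
    (μ00 : A0 →ₗ[K] B0 →ₗ[K] B0) (μ01 : A0 →ₗ[K] B1 →ₗ[K] B1) (μ1 : A1 →ₗ[K] B0 →ₗ[K] B1)
    (ρ00' : B0 →ₗ[K] A0 →ₗ[K] A0) (ρ01' : B0 →ₗ[K] A1 →ₗ[K] A1) (ρ1' : B1 →ₗ[K] A0 →ₗ[K] A1)
    (μ00' : B0 →ₗ[K] A0 →ₗ[K] A0) (μ01' : B0 →ₗ[K] A1 →ₗ[K] A1) (μ1' : B1 →ₗ[K] A0 →ₗ[K] A1)
    (hmp : IsMatchedPairPreLie2 K (⇑d) (fun x y => m00 x y) (fun x a => m01 x a)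
      (fun a x => m10 a x) (⇑d') (fun x y => n00 x y) (fun x a => n01 x a)
      (fun a x => n10 a x)
      (fun x u => ρ00 x u) (fun x m => ρ01 x m) (fun a u => ρ1 a u)
      (fun x u => μ00 x u) (fun x m => μ01 x m) (fun a u => μ1 a u)
      (fun u x => ρ00' u x) (fun u a => ρ01' u a) (fun m x => ρ1' m x)
      (fun u x => μ00' u x) (fun u a => μ01' u a) (fun m x => μ1' m x)) :
    IsStrictPreLie2 K
      (fun p : A1 × B1 => ((d p.1, d' p.2) : A0 × B0))
      (fun p q : A0 × B0 =>
        ((m00 p.1 q.1 + μ00' q.2 p.1 + ρ00' p.2 q.1,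
          n00 p.2 q.2 + ρ00 p.1 q.2 + μ00 q.1 p.2) : A0 × B0))
      (fun (p : A0 × B0) (q : A1 × B1) =>
        ((m01 p.1 q.1 + μ1' q.2 p.1 + ρ01' p.2 q.1,
          n01 p.2 q.2 + ρ01 p.1 q.2 + μ1 q.1 p.2) : A1 × B1))
      (fun (p : A1 × B1) (q : A0 × B0) =>
        ((m10 p.1 q.1 + μ01' q.2 p.1 + ρ1' p.2 q.1,
          n10 p.2 q.2 + ρ1 p.1 q.2 + μ01 q.1 p.2) : A1 × B1)) := by
  constructor
  · -- d_lin
    exact ⟨fun p q => by simp [Prod.ext_iff], fun c p => by simp [Prod.ext_iff]⟩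
  · -- m00_bilin
    refine ⟨fun p => ⟨fun q r => ?_, fun c q => ?_⟩, fun q => ⟨fun p r => ?_, fun c p => ?_⟩⟩ <;>
    · simp only [Prod.fst_add, Prod.snd_add, Prod.smul_fst, Prod.smul_snd, map_add, map_smul,
        LinearMap.add_apply, LinearMap.smul_apply, Prod.mk_add_mk, Prod.smul_mk, Prod.mk.injEq]
      exact ⟨by module, by module⟩
  · -- m01_bilin
    refine ⟨fun p => ⟨fun q r => ?_, fun c q => ?_⟩, fun q => ⟨fun p r => ?_, fun c p => ?_⟩⟩ <;>
    · simp only [Prod.fst_add, Prod.snd_add, Prod.smul_fst, Prod.smul_snd, map_add, map_smul,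
        LinearMap.add_apply, LinearMap.smul_apply, Prod.mk_add_mk, Prod.smul_mk, Prod.mk.injEq]
      exact ⟨by module, by module⟩
  · -- m10_bilin
    refine ⟨fun p => ⟨fun q r => ?_, fun c q => ?_⟩, fun q => ⟨fun p r => ?_, fun c p => ?_⟩⟩ <;>
    · simp only [Prod.fst_add, Prod.snd_add, Prod.smul_fst, Prod.smul_snd, map_add, map_smul,
        LinearMap.add_apply, LinearMap.smul_apply, Prod.mk_add_mk, Prod.smul_mk, Prod.mk.injEq]
      exact ⟨by module, by module⟩
  · -- d_m01
    rintro ⟨x, u⟩ ⟨a, b⟩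
    simp only [map_add, LinearMap.add_apply, Prod.mk.injEq]
    refine ⟨?_, ?_⟩
    · linear_combination (norm := module)
        hmp.alg.d_m01 x a - hmp.rep'.μcomp0 b x - hmp.rep'.toRepLie.chain u a
    · linear_combination (norm := module)
        hmp.alg'.d_m01 u b - hmp.rep.toRepLie.chain x b - hmp.rep.μcomp0 a u
  · -- d_m10
    rintro ⟨a, b⟩ ⟨x, u⟩
    simp only [map_add, LinearMap.add_apply, Prod.mk.injEq]
    refine ⟨?_, ?_⟩
    · linear_combination (norm := module)
        hmp.alg.d_m10 a x - hmp.rep'.μchain u a - hmp.rep'.toRepLie.comp0 b x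
    · linear_combination (norm := module)
        hmp.alg'.d_m10 b u - hmp.rep.toRepLie.comp0 a u - hmp.rep.μchain x b
  · -- d_mix
    rintro ⟨a, b⟩ ⟨c, e⟩
    simp only [map_add, LinearMap.add_apply, Prod.mk.injEq]
    refine ⟨?_, ?_⟩
    · linear_combination (norm := module)
        hmp.alg.d_mix a c - hmp.rep'.μcomp1 e a + hmp.rep'.toRepLie.comp1 b c
    · linear_combination (norm := module)
        hmp.alg'.d_mix b e + hmp.rep.toRepLie.comp1 a e - hmp.rep.μcomp1 c b
  · -- preLie0
    rintro ⟨x, u⟩ ⟨y, v⟩ ⟨z, w⟩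
    simp only [map_add, map_sub, LinearMap.add_apply, LinearMap.sub_apply,
      Prod.mk_sub_mk, Prod.mk.injEq]
    have h1 := hmp.alg.preLie0 x y z
    have h2 := hmp.eqM3 w x y
    have h3 := hmp.eqM14 u y z
    have h4 := hmp.eqM14 v x z
    have h5 := hmp.rep'.eqA0 u w y
    have h6 := hmp.rep'.eqA0 v w x
    have h7 := hmp.rep'.toRepLie.rep00 u v z
    have g1 := hmp.alg'.preLie0 u v w
    have g2 := hmp.eqM4 z u v
    have g3 := hmp.eqM13 x v w
    have g4 := hmp.eqM13 y u w
    have g5 := hmp.rep.eqA0 x z v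
    have g6 := hmp.rep.eqA0 y z u
    have g7 := hmp.rep.toRepLie.rep00 x y w
    simp only [map_add, map_sub, LinearMap.add_apply, LinearMap.sub_apply]
      at h1 h2 h3 h4 h5 h6 h7 g1 g2 g3 g4 g5 g6 g7
    refine ⟨?_, ?_⟩
    · linear_combination (norm := module) h1 - h2 + h3 - h4 - h5 + h6 - h7
    · linear_combination (norm := module) g1 - g2 + g3 - g4 - g5 + g6 - g7
  · -- preLie1
    rintro ⟨x, u⟩ ⟨y, v⟩ ⟨a, b⟩
    simp only [map_add, map_sub, LinearMap.add_apply, LinearMap.sub_apply,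
      Prod.mk_sub_mk, Prod.mk.injEq]
    have h1 := hmp.alg.preLie1 x y a
    have h2 := hmp.eqM1 b x y
    have h3 := hmp.eqM8 u y a
    have h4 := hmp.eqM8 v x a
    have h5 := hmp.rep'.eqB u b y
    have h6 := hmp.rep'.eqB v b x
    have h7 := hmp.rep'.toRepLie.rep01 u v a
    have g1 := hmp.alg'.preLie1 u v b
    have g2 := hmp.eqM2 a u v
    have g3 := hmp.eqM7 x v b
    have g4 := hmp.eqM7 y u b
    have g5 := hmp.rep.eqB x a v
    have g6 := hmp.rep.eqB y a u
    have g7 := hmp.rep.toRepLie.rep01 x y b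
    simp only [map_add, map_sub, LinearMap.add_apply, LinearMap.sub_apply]
      at h1 h2 h3 h4 h5 h6 h7 g1 g2 g3 g4 g5 g6 g7
    refine ⟨?_, ?_⟩
    · linear_combination (norm := module) h1 - h2 + h3 - h4 - h5 + h6 - h7
    · linear_combination (norm := module) g1 - g2 + g3 - g4 - g5 + g6 - g7
  · -- preLie2
    rintro ⟨a, b⟩ ⟨x, u⟩ ⟨y, v⟩
    simp only [map_add, map_sub, LinearMap.add_apply, LinearMap.sub_apply,
      Prod.mk_sub_mk, Prod.mk.injEq]
    have h1 := hmp.alg.preLie2 a x y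
    have h2 := hmp.eqM5 v x a
    have h3 := hmp.eqM10 u a y
    have h4 := hmp.eqM12 b x y
    have h5 := hmp.rep'.eqA1 u v a
    have h6 := hmp.rep'.eqC b v x
    have h7 := hmp.rep'.toRepLie.rep1 u b y
    have g1 := hmp.alg'.preLie2 b u v
    have g2 := hmp.eqM6 y u b
    have g3 := hmp.eqM9 x b v
    have g4 := hmp.eqM11 a u v
    have g5 := hmp.rep.eqA1 x y b
    have g6 := hmp.rep.eqC a y u
    have g7 := hmp.rep.toRepLie.rep1 x a v
    simp only [map_add, map_sub, LinearMap.add_apply, LinearMap.sub_apply]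
      at h1 h2 h3 h4 h5 h6 h7 g1 g2 g3 g4 g5 g6 g7
    refine ⟨?_, ?_⟩
    · linear_combination (norm := module) h1 + h2 - h3 + h4 + h5 - h6 + h7
    · linear_combination (norm := module) g1 + g2 - g3 + g4 + g5 - g6 + g7
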